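/- Let X be a complete CAT(0) space, f : X → (-∞,∞] convex, lsc, proper, with a minimizer p satisfying d(x,p) ≤ b, and (x_n) the proximal point algorithm starting at x with positive step sizes (γ_n) where Σγ_n = ∞ with rate of divergence θ. Then for every k ∈ ℕ and every n ≥ β(k) := θ^M(⌈b²(k+1)/2⌉)+1, the iterate x_n is a k-approximate minimizer of f: f(x_n) ≤ f(y) + 1/(k+1) for all y ∈ X. In particular β is a rate of asymptotic regularity of (x_n) with respect to the approximation Argmin_k(f). -/

import Mathlib

lemma limit_aux {s D : ℝ} (hD : 0 ≤ D) (h : ∀ t : ℝ, 0 < t → t < 1 → s ≤ t * D) : s ≤ 0 := by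
  by_contra hs
  push_neg at hs
  have ht0 : (0:ℝ) < min (1/2) (s/(2*(D+1))) := by
    apply lt_min (by norm_num)
    positivity
  have ht1 : min (1/2) (s/(2*(D+1))) < 1 := lt_of_le_of_lt (min_le_left _ _) (by norm_num)
  have := h _ ht0 ht1
  have h2 : min (1/2) (s/(2*(D+1))) * D ≤ (s/(2*(D+1))) * D :=
    mul_le_mul_of_nonneg_right (min_le_right _ _) hD
  have h3 : (s/(2*(D+1))) * D < s := by
    rw [div_mul_eq_mul_div, div_lt_iff₀ (by linarith)]
    nlinarith
  linarith

/-- θ^M(n) = max_{i ≤ n} θ(i) -/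
def maxUpTo (θ : ℕ → ℕ) (n : ℕ) : ℕ := (Finset.range (n+1)).sup θ

/-- β(k) = θ^M(⌈b²(k+1)/2⌉) + 1 -/
noncomputable def betaRate (θ : ℕ → ℕ) (b : ℝ) (k : ℕ) : ℕ :=
  maxUpTo θ ⌈b^2 * ((k:ℝ)+1) / 2⌉₊ + 1

/-- β is a rate of asymptotic regularity of the proximal point
algorithm with respect to the approximations Argmin_k(f): for n ≥ β(k), the
iterate x_n is a k-approximate minimizer of f. -/
theorem stmt13
    {X : Type*} [MetricSpace X] [CompleteSpace X]
    -- geodesic convex-combination structure: `w x y t` is the point `(1-t)x + ty`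
    (w : X → X → ℝ → X)
    (hw1 : ∀ x y : X, ∀ t ∈ Set.Icc (0:ℝ) 1, dist x (w x y t) = t * dist x y)
    (hw2 : ∀ x y : X, ∀ t ∈ Set.Icc (0:ℝ) 1, dist y (w x y t) = (1-t) * dist x y)
    -- the CAT(0) inequality
    (hcat : ∀ x y z : X, ∀ t ∈ Set.Icc (0:ℝ) 1,
      dist z (w x y t)^2 ≤ (1-t) * dist z x^2 + t * dist z y^2 - t*(1-t) * dist x y^2)
    (f : X → EReal)
    -- f is convex, lower semicontinuous and proper (never -∞, somewhere finite)
    (hconv : ∀ x y : X, ∀ t ∈ Set.Icc (0:ℝ) 1,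
      f (w x y t) ≤ ((1 - t : ℝ) : EReal) * f x + ((t : ℝ) : EReal) * f y)
    (hlsc : LowerSemicontinuous f)
    (hproper : ∃ x, f x ≠ ⊤) (hbot : ∀ x, f x ≠ ⊥)
    -- J is the resolvent: J γ x minimizes y ↦ f(y) + (1/(2γ)) d(x,y)², uniquely
    (J : ℝ → X → X)
    (hJ : ∀ γ : ℝ, 0 < γ → ∀ x y : X,
      f (J γ x) + ((1/(2*γ) * dist x (J γ x)^2 : ℝ) : EReal) ≤
        f y + ((1/(2*γ) * dist x y^2 : ℝ) : EReal))
    (hJuniq : ∀ γ : ℝ, 0 < γ → ∀ x m : X,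
      (∀ y, f m + ((1/(2*γ) * dist x m^2 : ℝ) : EReal) ≤
        f y + ((1/(2*γ) * dist x y^2 : ℝ) : EReal)) → m = J γ x)
    (p : X) (hp : ∀ y, f p ≤ f y)
    (x0 : X) (b : ℝ) (hb : 0 < b) (hxb : dist x0 p ≤ b)
    (γseq : ℕ → ℝ) (hγseq : ∀ n, 0 < γseq n)
    (θ : ℕ → ℕ) (hθ : ∀ P : ℕ, (P:ℝ) ≤ ∑ i ∈ Finset.range (θ P + 1), γseq i)
    (x : ℕ → X) (hx0 : x 0 = x0) (hxs : ∀ n, x (n+1) = J (γseq n) (x n)) :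
    ∀ k : ℕ, ∀ n : ℕ, betaRate θ b k ≤ n →
      ∀ y : X, f (x n) ≤ f y + ((1 / ((k:ℝ)+1) : ℝ) : EReal) := by
  classical
  obtain ⟨y₀, hy₀⟩ := hproper
  -- finiteness of f at resolvent points
  have hfinJ : ∀ (γ : ℝ), 0 < γ → ∀ xx : X, f (J γ xx) ≠ ⊤ := by
    intro γ hγ xx hT
    have h := hJ γ hγ xx y₀
    rw [hT, EReal.top_add_coe] at h
    have hy₀' := hbot y₀
    lift f y₀ to ℝ using ⟨hy₀, hy₀'⟩ with a ha
    rw [← EReal.coe_add] at h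
    exact EReal.coe_ne_top _ (top_le_iff.mp h)
  -- key real inequality for the resolvent
  have hkey : ∀ (γ : ℝ), 0 < γ → ∀ (xx y : X), f y ≠ ⊤ →
      (f (J γ xx)).toReal + 1/(2*γ) * (dist xx (J γ xx)^2 + dist (J γ xx) y^2)
        ≤ (f y).toReal + 1/(2*γ) * dist xx y^2 := by
    intro γ hγ xx y hyT
    set m := J γ xx with hm
    have hc : (0:ℝ) < 1/(2*γ) := by positivity
    have hmT : f m ≠ ⊤ := hfinJ γ hγ xx
    set am := (f m).toReal with ham
    set ay := (f y).toReal with hay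
    have hfm : f m = (am : EReal) := (EReal.coe_toReal hmT (hbot m)).symm
    have hfy : f y = (ay : EReal) := (EReal.coe_toReal hyT (hbot y)).symm
    -- for each t ∈ (0,1)
    have hstep : ∀ t : ℝ, 0 < t → t < 1 →
        am + 1/(2*γ) * (dist xx m^2 + dist m y^2) - (ay + 1/(2*γ) * dist xx y^2)
          ≤ t * (1/(2*γ) * dist m y^2) := by
      intro t ht0 ht1
      have htI : t ∈ Set.Icc (0:ℝ) 1 := ⟨le_of_lt ht0, le_of_lt ht1⟩
      set z := w m y t with hz
      have h1 := hJ γ hγ xx z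
      have h2 := hconv m y t htI
      have h3 := hcat m y xx t htI
      rw [hfm, hfy] at h2
      rw [← hm, hfm] at h1
      -- f z ≤ real
      have h2' : f z ≤ (((1-t) * am + t * ay : ℝ) : EReal) := by
        refine h2.trans_eq ?_
        push_cast
        ring
      have h1' : ((am : EReal) + ((1/(2*γ) * dist xx m^2 : ℝ) : EReal)) ≤
          (((1-t) * am + t * ay + 1/(2*γ) * dist xx z^2 : ℝ) : EReal) := by
        refine h1.trans ?_
        push_cast
        exact add_le_add h2' le_rfl
      rw [← EReal.coe_add, EReal.coe_le_coe_iff] at h1'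
      -- now pure real arithmetic
      have h4 : am + 1/(2*γ) * dist xx m^2 ≤
          (1-t) * am + t * ay + 1/(2*γ) *
            ((1-t) * dist xx m^2 + t * dist xx y^2 - t*(1-t) * dist m y^2) := by
        have := mul_le_mul_of_nonneg_left h3 (le_of_lt hc)
        calc am + 1/(2*γ) * dist xx m^2 ≤ (1-t) * am + t * ay + 1/(2*γ) * dist xx z^2 := h1'
          _ ≤ _ := by linarith [mul_le_mul_of_nonneg_left h3 (le_of_lt hc)]
      nlinarith [sq_nonneg (dist m y), hγseq 0]
    have := limit_aux (D := 1/(2*γ) * dist m y^2) (by positivity) hstep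
    linarith
  -- finiteness along the iteration
  have hfinx : ∀ n, f (x (n+1)) ≠ ⊤ := fun n => by
    rw [hxs n]; exact hfinJ _ (hγseq n) _
  have hfpT : f p ≠ ⊤ := ne_top_of_le_ne_top (hfinx 0) (hp (x 1))
  set fp := (f p).toReal with hfp
  have hfpE : f p = (fp : EReal) := (EReal.coe_toReal hfpT (hbot p)).symm
  -- one-step decrease towards p
  have hstepp : ∀ n, ((f (x (n+1))).toReal - fp) * (2 * γseq n)
      ≤ dist (x n) p^2 - dist (x (n+1)) p^2 := by
    intro n
    have h := hkey (γseq n) (hγseq n) (x n) p hfpT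
    rw [← hxs n, ← hfp] at h
    have hγ := hγseq n
    have hc : (0:ℝ) < 1/(2*γseq n) := by positivity
    have h2 : (f (x (n+1))).toReal - fp
        ≤ 1/(2*γseq n) * (dist (x n) p^2 - dist (x (n+1)) p^2) := by
      nlinarith [mul_nonneg hc.le (sq_nonneg (dist (x n) (x (n+1))))]
    have h3 := mul_le_mul_of_nonneg_right h2 (by positivity : (0:ℝ) ≤ 2*γseq n)
    have h4 : 1/(2*γseq n) * (dist (x n) p^2 - dist (x (n+1)) p^2) * (2*γseq n)
        = dist (x n) p^2 - dist (x (n+1)) p^2 := by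
      field_simp
    linarith [h3, h4.symm.le]
  -- monotonicity
  have hmono : ∀ n, f (x (n+1)) ≤ f (x n) := by
    intro n
    have h := hJ (γseq n) (hγseq n) (x n) (x n)
    rw [← hxs n] at h
    simp only [dist_self] at h
    rw [show (1/(2*γseq n) * (0:ℝ)^2 : ℝ) = 0 from by ring, EReal.coe_zero, add_zero] at h
    have hγ := hγseq n
    have h' : f (x (n+1)) ≤ f (x (n+1)) + ((1/(2*γseq n) * dist (x n) (x (n+1))^2 : ℝ) : EReal) := by
      nth_rewrite 1 [← add_zero (f (x (n+1)))]
      refine add_le_add le_rfl ?_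
      have h0 : (0:ℝ) ≤ 1/(2*γseq n) * dist (x n) (x (n+1))^2 := by positivity
      exact_mod_cast EReal.coe_le_coe_iff.mpr h0
    exact h'.trans h
  have hanti' : ∀ m d : ℕ, f (x (m+d)) ≤ f (x m) := by
    intro m d
    induction d with
    | zero => exact le_rfl
    | succ d ih => exact le_trans (hmono (m+d)) ih
  have hanti : ∀ m n : ℕ, m ≤ n → f (x n) ≤ f (x m) := by
    intro m n hmn
    obtain ⟨d, rfl⟩ := Nat.exists_eq_add_of_le hmn
    exact hanti' m d
  -- summed inequality
  have hsum : ∀ N : ℕ, 1 ≤ N →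
      ((f (x N)).toReal - fp) * (2 * ∑ i ∈ Finset.range N, γseq i) ≤ b^2 := by
    intro N hN
    have hxNT : f (x N) ≠ ⊤ := by
      obtain ⟨M, rfl⟩ := Nat.exists_eq_add_of_le' hN
      simpa using hfinx M
    have hb2 : dist (x 0) p^2 ≤ b^2 := by
      rw [hx0]
      have := dist_nonneg (x := x0) (y := p)
      nlinarith
    calc ((f (x N)).toReal - fp) * (2 * ∑ i ∈ Finset.range N, γseq i)
        = ∑ i ∈ Finset.range N, ((f (x N)).toReal - fp) * (2 * γseq i) := by
          rw [Finset.mul_sum, Finset.mul_sum]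
      _ ≤ ∑ i ∈ Finset.range N, ((f (x (i+1))).toReal - fp) * (2 * γseq i) := by
          apply Finset.sum_le_sum
          intro i hi
          have hi' : i + 1 ≤ N := Finset.mem_range.mp hi
          have hle : f (x N) ≤ f (x (i+1)) := hanti _ _ hi'
          have hle' : (f (x N)).toReal ≤ (f (x (i+1))).toReal :=
            EReal.toReal_le_toReal hle (hbot _) (hfinx i)
          exact mul_le_mul_of_nonneg_right (by linarith)
            (by linarith [hγseq i])
      _ ≤ ∑ i ∈ Finset.range N, (dist (x i) p^2 - dist (x (i+1)) p^2) :=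
          Finset.sum_le_sum (fun i _ => hstepp i)
      _ = dist (x 0) p^2 - dist (x N) p^2 :=
          Finset.sum_range_sub' (fun i => dist (x i) p^2) N
      _ ≤ b^2 := by nlinarith [sq_nonneg (dist (x N) p)]
  -- conclusion
  intro k n hn y
  set P := ⌈b^2 * ((k:ℝ)+1) / 2⌉₊ with hP
  have hPpos : 0 < P := Nat.ceil_pos.mpr (by positivity)
  have hθP : θ P + 1 ≤ n := by
    have h1 : θ P ≤ maxUpTo θ P :=
      Finset.le_sup (Finset.self_mem_range_succ P)
    have h2 : maxUpTo θ P + 1 ≤ n := hn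
    omega
  have hn1 : 1 ≤ n := le_trans (by omega) hθP
  have hS : (P:ℝ) ≤ ∑ i ∈ Finset.range n, γseq i := by
    refine (hθ P).trans ?_
    apply Finset.sum_le_sum_of_subset_of_nonneg
    · exact Finset.range_subset_range.mpr hθP
    · intro i _ _; exact (hγseq i).le
  have hPb : b^2 * ((k:ℝ)+1) / 2 ≤ (P:ℝ) := Nat.le_ceil _
  set S := ∑ i ∈ Finset.range n, γseq i with hSdef
  have hSpos : 0 < S := lt_of_lt_of_le (by exact_mod_cast hPpos) hS
  have hsum' := hsum n hn1
  have hkpos : (0:ℝ) < (k:ℝ) + 1 := by positivity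
  rw [← hSdef] at hsum'
  have hfin : (f (x n)).toReal - fp ≤ 1/((k:ℝ)+1) := by
    by_contra hcon
    push_neg at hcon
    have h2S : b^2 * ((k:ℝ)+1) ≤ 2 * S := by linarith
    have hgpos : (0:ℝ) < (f (x n)).toReal - fp := lt_trans (by positivity) hcon
    have h1 : ((f (x n)).toReal - fp) * (b^2 * ((k:ℝ)+1)) ≤ b^2 :=
      le_trans (mul_le_mul_of_nonneg_left h2S hgpos.le) hsum'
    have h2 : 1 < ((f (x n)).toReal - fp) * ((k:ℝ)+1) := (div_lt_iff₀ hkpos).mp hcon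
    nlinarith [mul_pos hb hb]
  have hxnT : f (x n) ≠ ⊤ := by
    obtain ⟨M, rfl⟩ := Nat.exists_eq_add_of_le' hn1
    simpa using hfinx M
  calc f (x n) = (((f (x n)).toReal : ℝ) : EReal) :=
        (EReal.coe_toReal hxnT (hbot _)).symm
    _ ≤ (((fp + 1/((k:ℝ)+1) : ℝ)) : EReal) := by
        apply EReal.coe_le_coe_iff.mpr
        linarith
    _ = f p + ((1/((k:ℝ)+1) : ℝ) : EReal) := by
        rw [EReal.coe_add, hfpE]
    _ ≤ f y + ((1/((k:ℝ)+1) : ℝ) : EReal) := add_le_add (hp y) le_rfl
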